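/- Let G be a graph with γ_R(G − S) < γ_R(G) for every k-subset S of V(G), and let x be a vertex of degree exactly k. Then γ_R(G − N(x)) = γ_R(G) − 1, and there is a minimum-weight Roman dominating function f on G with f(x) = 2 and f(u) = 0 for every neighbor u of x. -/

import Mathlib

def IsRDF {V : Type*} (G : SimpleGraph V) (f : V → ℕ) : Prop :=
  (∀ v, f v ≤ 2) ∧ ∀ v, f v = 0 → ∃ u, G.Adj v u ∧ f u = 2

noncomputable def gammaR {V : Type*} [Fintype V] (G : SimpleGraph V) : ℕ :=
  sInf {w | ∃ f, IsRDF G f ∧ ∑ v, f v = w}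

def IsMinRDF {V : Type*} [Fintype V] (G : SimpleGraph V) (f : V → ℕ) : Prop :=
  IsRDF G f ∧ ∑ v, f v = gammaR G

noncomputable instance myInstSetFintype {V : Type*} [Fintype V] (s : Set V) : Fintype s :=
  s.toFinite.fintype

lemma exists_minRDF {V : Type*} [Fintype V] (G : SimpleGraph V) :
    ∃ f, IsRDF G f ∧ ∑ v, f v = gammaR G := by
  have hne : {w | ∃ f, IsRDF G f ∧ ∑ v, f v = w}.Nonempty := by
    refine ⟨∑ v : V, (2:ℕ), (fun _ => 2), ⟨fun v => le_refl 2, fun v hv => by simp at hv⟩, rfl⟩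
  have := Nat.sInf_mem hne
  exact this

lemma gammaR_le {V : Type*} [Fintype V] (G : SimpleGraph V) (f : V → ℕ)
    (hf : IsRDF G f) : gammaR G ≤ ∑ v, f v :=
  Nat.sInf_le ⟨f, hf, rfl⟩

theorem gammaR_kcritical_neighborhood_removal {V : Type*} [Fintype V]
    (G : SimpleGraph V) (k : ℕ)
    (hcrit : ∀ S : Finset V, S.card = k → gammaR (G.induce {u | u ∉ S}) < gammaR G)
    (x : V) (hdeg : (G.neighborSet x).ncard = k) :
    gammaR (G.induce {u | u ∉ G.neighborSet x}) = gammaR G - 1 ∧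
    ∃ f, IsMinRDF G f ∧ f x = 2 ∧ ∀ u ∈ G.neighborSet x, f u = 0 := by
  classical
  set N := G.neighborSet x with hN
  set s : Set V := {u | u ∉ N} with hs
  -- γ(H) < γ(G)
  have hcard : N.toFinset.card = k := by rw [← Set.ncard_eq_toFinset_card']; exact hdeg
  have hlt : gammaR (G.induce s) < gammaR G := by
    have h := hcrit N.toFinset hcard
    have hset : {u | u ∉ N.toFinset} = s := by ext u; simp [hs]
    rwa [hset] at h
  -- minimum RDF g on the induced graph
  obtain ⟨g, hg, hgsum⟩ := exists_minRDF (G.induce s)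
  have hxs : x ∈ s := by simp [hs, hN]
  set x0 : s := ⟨x, hxs⟩ with hx0
  have hgx : 1 ≤ g x0 := by
    by_contra h
    have h0 : g x0 = 0 := by omega
    obtain ⟨u, hu, -⟩ := hg.2 x0 h0
    have : (u : V) ∈ N := by
      rw [hN, SimpleGraph.mem_neighborSet]
      exact (SimpleGraph.comap_adj.mp hu)
    exact u.2 this
  -- define f on V
  set f : V → ℕ := fun v => if h : v ∈ s then (if v = x then 2 else g ⟨v, h⟩) else 0 with hf
  have hfx : f x = 2 := by simp [hf, hxs]
  have hfN : ∀ u ∈ N, f u = 0 := by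
    intro u hu
    have : u ∉ s := by simp [hs, hu]
    simp [hf, this]
  have hfRDF : IsRDF G f := by
    constructor
    · intro v
      by_cases h : v ∈ s
      · by_cases hvx : v = x <;> simp [hf, h, hvx, hxs, hg.1 ⟨v, h⟩]
      · simp [hf, h]
    · intro v hv
      by_cases h : v ∈ s
      · have hvx : v ≠ x := by
          intro e; rw [e] at hv; rw [hfx] at hv; omega
        have hg0 : g ⟨v, h⟩ = 0 := by
          simpa [hf, h, hvx] using hv
        obtain ⟨u, hu, hu2⟩ := hg.2 ⟨v, h⟩ hg0
        refine ⟨u, SimpleGraph.comap_adj.mp hu, ?_⟩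
        by_cases huv : (u : V) = x
        · have : u = x0 := Subtype.ext huv
          rw [huv]; exact hfx
        · simp only [hf]
          rw [dif_pos u.2, if_neg huv]
          rwa [Subtype.coe_eta]
      · have hvN : v ∈ N := by simpa [hs] using h
        exact ⟨x, (SimpleGraph.mem_neighborSet G x v).mp hvN |>.symm, hfx⟩
  -- sum computation
  have hsum1 : ∑ v, f v = ∑ v : s, f ↑v := by
    rw [← Finset.sum_subtype s.toFinset (fun u => Set.mem_toFinset) f]
    refine (Finset.sum_subset (Finset.subset_univ s.toFinset) ?_).symm
    intro v _ hv
    have : v ∉ s := by simpa using hv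
    simp [hf, this]
  have hval : ∀ v : s, f ↑v = if v = x0 then 2 else g v := by
    intro v
    simp only [hf]
    rw [dif_pos v.2]
    by_cases hvx : (v : V) = x
    · have : v = x0 := Subtype.ext hvx
      rw [if_pos hvx, if_pos this]
    · have : v ≠ x0 := fun e => hvx (congrArg Subtype.val e)
      rw [if_neg hvx, if_neg this, Subtype.coe_eta]
  have hsum2 : ∑ v : s, f ↑v = 2 + ∑ v ∈ Finset.univ.erase x0, g v := by
    rw [← Finset.add_sum_erase Finset.univ (fun v : s => f ↑v) (Finset.mem_univ x0)]
    rw [hval x0, if_pos rfl]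
    congr 1
    refine Finset.sum_congr rfl fun v hv => ?_
    rw [hval v, if_neg (Finset.ne_of_mem_erase hv)]
  have hsum3 : ∑ v : s, g v = g x0 + ∑ v ∈ Finset.univ.erase x0, g v :=
    (Finset.add_sum_erase Finset.univ g (Finset.mem_univ x0)).symm
  have hle : gammaR G ≤ ∑ v, f v := gammaR_le G f hfRDF
  have hgub : g x0 ≤ 2 := hg.1 x0
  have key : ∑ v, f v = gammaR G ∧ gammaR (G.induce s) + 1 = gammaR G := by
    constructor <;> omega
  refine ⟨by omega, f, ⟨hfRDF, key.1⟩, hfx, hfN⟩
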